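/- Let X be a vertex of L_n and M ∈ L_n with ‖M − X‖ < 1 in Frobenius norm. Then X is the unique maximizer of Y ↦ M·Y over L_n, i.e., T(M) = {X}; hence every vertex of L_n is an attractive fixed point of T. -/

import Mathlib

def elliptope (n : ℕ) : Set (Matrix (Fin n) (Fin n) ℝ) :=
  {X | X.PosSemidef ∧ ∀ i, X i i = 1}

def frob {n : ℕ} (A B : Matrix (Fin n) (Fin n) ℝ) : ℝ :=
  ∑ i, ∑ j, A i j * B i j

lemma entry_bound {n : ℕ} {Y : Matrix (Fin n) (Fin n) ℝ} (hY : Y ∈ elliptope n)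
    (i j : Fin n) (c : ℝ) (hc : c = 1 ∨ c = -1) : 0 ≤ 1 + c * Y i j := by
  rcases hY with ⟨hPSD, hdiag⟩
  have hsym : Y j i = Y i j := by
    have := hPSD.1.apply j i
    simpa using this.symm
  by_cases hij : i = j
  · subst hij
    rcases hc with rfl | rfl <;> simp [hdiag i]
  · set x : Fin n → ℝ := fun k => (if k = i then (1:ℝ) else 0) + (if k = j then c else 0) with hx
    have h := hPSD.dotProduct_mulVec_nonneg x
    have hstar : star x = x := by funext k; simp [hx]
    rw [hstar] at h
    have hval : dotProduct x (Y.mulVec x) = 2 + 2 * (c * Y i j) := by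
      simp only [dotProduct, Matrix.mulVec, hx]
      simp only [mul_add, add_mul, Finset.sum_add_distrib, ite_mul, mul_ite, one_mul, mul_one,
        zero_mul, mul_zero, Finset.sum_ite_eq', Finset.mem_univ, if_true]
      have h1 : c * c = 1 := by rcases hc with rfl | rfl <;> norm_num
      rw [hdiag i, hdiag j, hsym]
      ring_nf
      nlinarith [h1]
    rw [hval] at h
    linarith

lemma frob_prod {n : ℕ} (A B : Matrix (Fin n) (Fin n) ℝ) :
    frob A B = ∑ p : Fin n × Fin n, A p.1 p.2 * B p.1 p.2 := by
  rw [frob, ← Finset.sum_product', Finset.univ_product_univ]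

lemma frob_self_nonneg {n : ℕ} (A : Matrix (Fin n) (Fin n) ℝ) : 0 ≤ frob A A := by
  rw [frob_prod]
  exact Finset.sum_nonneg fun p _ => mul_self_nonneg _

lemma frob_cs {n : ℕ} (A B : Matrix (Fin n) (Fin n) ℝ) :
    frob A B ≤ Real.sqrt (frob A A) * Real.sqrt (frob B B) := by
  rw [frob_prod, frob_prod, frob_prod]
  set f : Fin n × Fin n → ℝ := fun p => A p.1 p.2
  set g : Fin n × Fin n → ℝ := fun p => B p.1 p.2
  have key := Finset.sum_mul_sq_le_sq_mul_sq Finset.univ f g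
  have hsq : ∀ h : Fin n × Fin n → ℝ, ∑ p, h p * h p = ∑ p, h p ^ 2 := by
    intro h; apply Finset.sum_congr rfl; intros; ring
  rw [hsq f, hsq g]
  have h1 : (0:ℝ) ≤ ∑ p, f p ^ 2 := Finset.sum_nonneg fun p _ => sq_nonneg _
  have h2 : (0:ℝ) ≤ ∑ p, g p ^ 2 := Finset.sum_nonneg fun p _ => sq_nonneg _
  calc ∑ p, f p * g p ≤ |∑ p, f p * g p| := le_abs_self _
    _ = Real.sqrt ((∑ p, f p * g p) ^ 2) := (Real.sqrt_sq_eq_abs _).symm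
    _ ≤ Real.sqrt ((∑ p, f p ^ 2) * ∑ p, g p ^ 2) := Real.sqrt_le_sqrt key
    _ = Real.sqrt (∑ p, f p ^ 2) * Real.sqrt (∑ p, g p ^ 2) := Real.sqrt_mul h1 _

lemma frob_sub_right {n : ℕ} (A B C : Matrix (Fin n) (Fin n) ℝ) :
    frob A (B - C) = frob A B - frob A C := by
  simp [frob, Matrix.sub_apply, mul_sub, Finset.sum_sub_distrib]

lemma frob_sub_left {n : ℕ} (A B C : Matrix (Fin n) (Fin n) ℝ) :
    frob (A - B) C = frob A C - frob B C := by
  simp [frob, Matrix.sub_apply, sub_mul, Finset.sum_sub_distrib]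

lemma frob_neg_left {n : ℕ} (A B : Matrix (Fin n) (Fin n) ℝ) :
    frob (-A) B = - frob A B := by
  simp [frob, Finset.sum_neg_distrib]

lemma X_mem {n : ℕ} {v : Fin n → ℝ} (hv : ∀ i, v i = 1 ∨ v i = -1)
    {X : Matrix (Fin n) (Fin n) ℝ} (hXdef : ∀ i j, X i j = v i * v j) :
    X ∈ elliptope n := by
  refine ⟨Matrix.posSemidef_iff_dotProduct_mulVec.mpr ⟨?_, ?_⟩, ?_⟩
  · ext i j
    simp [Matrix.conjTranspose_apply, hXdef, mul_comm]
  · intro x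
    have hstar : star x = x := by funext k; simp
    rw [hstar]
    have hval : dotProduct x (X.mulVec x) = (∑ i, v i * x i) ^ 2 := by
      simp only [dotProduct, Matrix.mulVec, hXdef]
      rw [sq, Finset.sum_mul_sum]
      apply Finset.sum_congr rfl; intros i _
      rw [Finset.mul_sum]
      apply Finset.sum_congr rfl; intros j _
      ring
    rw [hval]; positivity
  · intro i
    rw [hXdef]
    rcases hv i with h | h <;> rw [h] <;> norm_num

lemma gap {n : ℕ} {v : Fin n → ℝ} (hv : ∀ i, v i = 1 ∨ v i = -1)
    {X : Matrix (Fin n) (Fin n) ℝ} (hXdef : ∀ i j, X i j = v i * v j)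
    (M : Matrix (Fin n) (Fin n) ℝ)
    (Y : Matrix (Fin n) (Fin n) ℝ) (hY : Y ∈ elliptope n) :
    frob M Y + (1 - Real.sqrt (frob (M - X) (M - X))) *
      (∑ i, ∑ j, (1 - v i * v j * Y i j)) ≤ frob M X := by
  set c := Real.sqrt (frob (M - X) (M - X)) with hcdef
  set S := ∑ i, ∑ j, (1 - v i * v j * Y i j) with hSdef
  have hc0 : 0 ≤ c := Real.sqrt_nonneg _
  have hterm : ∀ i j, 0 ≤ 1 - v i * v j * Y i j := by
    intro i j
    have := entry_bound hY i j (-(v i * v j))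
      (by rcases hv i with h | h <;> rcases hv j with h' | h' <;> rw [h, h'] <;> norm_num)
    linarith
  have hS0 : 0 ≤ S :=
    Finset.sum_nonneg fun i _ => Finset.sum_nonneg fun j _ => hterm i j
  have h2 : frob X (X - Y) = S := by
    rw [frob, hSdef]
    apply Finset.sum_congr rfl; intros i _
    apply Finset.sum_congr rfl; intros j _
    rw [Matrix.sub_apply, hXdef]
    rcases hv i with h | h <;> rcases hv j with h' | h' <;> rw [h, h'] <;> ring
  have h3 : frob (X - Y) (X - Y) = ∑ i, ∑ j, (1 - v i * v j * Y i j) ^ 2 := by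
    rw [frob]
    apply Finset.sum_congr rfl; intros i _
    apply Finset.sum_congr rfl; intros j _
    rw [Matrix.sub_apply, hXdef]
    rcases hv i with h | h <;> rcases hv j with h' | h' <;> rw [h, h'] <;> ring
  have h4 : frob (X - Y) (X - Y) ≤ S ^ 2 := by
    rw [h3, hSdef, ← Finset.sum_product' (f := fun i j => (1 - v i * v j * Y i j) ^ 2),
      ← Finset.sum_product' (f := fun i j => (1 - v i * v j * Y i j)), Finset.univ_product_univ]
    exact Finset.sum_sq_le_sq_sum_of_nonneg fun p _ => hterm p.1 p.2
  have h5 : Real.sqrt (frob (X - Y) (X - Y)) ≤ S := by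
    calc Real.sqrt (frob (X - Y) (X - Y)) ≤ Real.sqrt (S ^ 2) := Real.sqrt_le_sqrt h4
      _ = S := by rw [Real.sqrt_sq hS0]
  have h6 : -(c * S) ≤ frob (M - X) (X - Y) := by
    have := frob_cs (-(M - X)) (X - Y)
    rw [frob_neg_left] at this
    have hee : frob (-(M - X)) (-(M - X)) = frob (M - X) (M - X) := by
      simp only [frob, Matrix.neg_apply]
      apply Finset.sum_congr rfl; intros _ _
      apply Finset.sum_congr rfl; intros _ _
      ring
    rw [hee] at this
    have : -frob (M - X) (X - Y) ≤ c * S := by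
      calc -frob (M - X) (X - Y) ≤ c * Real.sqrt (frob (X - Y) (X - Y)) := this
        _ ≤ c * S := by exact mul_le_mul_of_nonneg_left h5 hc0
    linarith
  have h7 : frob M X - frob M Y = frob X (X - Y) + frob (M - X) (X - Y) := by
    rw [frob_sub_left, frob_sub_right, frob_sub_right]
    ring
  nlinarith [h6, h7, h2, hS0, hc0]

lemma S_eq_zero {n : ℕ} {v : Fin n → ℝ} (hv : ∀ i, v i = 1 ∨ v i = -1)
    {X : Matrix (Fin n) (Fin n) ℝ} (hXdef : ∀ i j, X i j = v i * v j)
    (Y : Matrix (Fin n) (Fin n) ℝ) (hY : Y ∈ elliptope n)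
    (hS : (∑ i, ∑ j, (1 - v i * v j * Y i j)) = 0) : Y = X := by
  have hterm : ∀ i j, 0 ≤ 1 - v i * v j * Y i j := by
    intro i j
    have := entry_bound hY i j (-(v i * v j))
      (by rcases hv i with h | h <;> rcases hv j with h' | h' <;> rw [h, h'] <;> norm_num)
    linarith
  have h1 : ∀ i ∈ Finset.univ, (∑ j, (1 - v i * v j * Y i j)) = 0 := by
    rw [← Finset.sum_eq_zero_iff_of_nonneg
      (fun i _ => Finset.sum_nonneg fun j _ => hterm i j)]
    exact hS
  have h2 : ∀ i j, 1 - v i * v j * Y i j = 0 := by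
    intro i j
    have := (Finset.sum_eq_zero_iff_of_nonneg (fun j _ => hterm i j)).mp
      (h1 i (Finset.mem_univ i)) j (Finset.mem_univ j)
    exact this
  ext i j
  rw [hXdef]
  have := h2 i j
  rcases hv i with h | h <;> rcases hv j with h' | h' <;> rw [h, h'] <;>
    rw [h, h'] at this <;> linarith

lemma key_set {n : ℕ} {v : Fin n → ℝ} (hv : ∀ i, v i = 1 ∨ v i = -1)
    {X : Matrix (Fin n) (Fin n) ℝ} (hXdef : ∀ i j, X i j = v i * v j)
    (M : Matrix (Fin n) (Fin n) ℝ)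
    (hclose : Real.sqrt (frob (M - X) (M - X)) < 1) :
    {Y | Y ∈ elliptope n ∧ ∀ Z ∈ elliptope n, frob M Z ≤ frob M Y} = {X} := by
  have hXell : X ∈ elliptope n := X_mem hv hXdef
  ext Y
  simp only [Set.mem_setOf_eq, Set.mem_singleton_iff]
  constructor
  · rintro ⟨hYe, hYmax⟩
    have hmax := hYmax X hXell
    have hgap := gap hv hXdef M Y hYe
    set c := Real.sqrt (frob (M - X) (M - X)) with hcdef
    set S := ∑ i, ∑ j, (1 - v i * v j * Y i j) with hSdef
    have hterm : ∀ i j, 0 ≤ 1 - v i * v j * Y i j := by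
      intro i j
      have := entry_bound hYe i j (-(v i * v j))
        (by rcases hv i with h | h <;> rcases hv j with h' | h' <;> rw [h, h'] <;> norm_num)
      linarith
    have hS0 : 0 ≤ S :=
      Finset.sum_nonneg fun i _ => Finset.sum_nonneg fun j _ => hterm i j
    have hSz : S = 0 := by nlinarith
    exact S_eq_zero hv hXdef Y hYe hSz
  · intro hYX
    subst hYX
    refine ⟨hXell, fun Z hZ => ?_⟩
    have hgap := gap hv hXdef M Z hZ
    have hterm : ∀ i j, 0 ≤ 1 - v i * v j * Z i j := by
      intro i j
      have := entry_bound hZ i j (-(v i * v j))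
        (by rcases hv i with h | h <;> rcases hv j with h' | h' <;> rw [h, h'] <;> norm_num)
      linarith
    have hS0 : 0 ≤ ∑ i, ∑ j, (1 - v i * v j * Z i j) :=
      Finset.sum_nonneg fun i _ => Finset.sum_nonneg fun j _ => hterm i j
    nlinarith [hgap, hS0, hclose, Real.sqrt_nonneg (frob (M - Y) (M - Y))]


theorem stmt18 {n : ℕ} (v : Fin n → ℝ) (hv : ∀ i, v i = 1 ∨ v i = -1)
    (X : Matrix (Fin n) (Fin n) ℝ) (hXdef : ∀ i j, X i j = v i * v j)
    (M : Matrix (Fin n) (Fin n) ℝ) (hM : M ∈ elliptope n)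
    (hclose : Real.sqrt (frob (M - X) (M - X)) < 1) :
    {Y | Y ∈ elliptope n ∧ ∀ Z ∈ elliptope n, frob M Z ≤ frob M Y} = {X} ∧
      ∀ x : ℕ → Matrix (Fin n) (Fin n) ℝ, x 0 = M →
        (∀ i, x (i + 1) ∈ elliptope n ∧
          ∀ Z ∈ elliptope n, frob (x i) Z ≤ frob (x i) (x (i + 1))) →
        Filter.Tendsto x Filter.atTop (nhds X) := by
  have hmain := key_set hv hXdef M hclose
  have hXclose : Real.sqrt (frob (X - X) (X - X)) < 1 := by
    have : frob (X - X) (X - X) = 0 := by simp [frob]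
    rw [this, Real.sqrt_zero]; norm_num
  have hXset := key_set hv hXdef X hXclose
  refine ⟨hmain, ?_⟩
  intro x hx0 hstep
  have hconst : ∀ k, x (k + 1) = X := by
    intro k
    induction k with
    | zero =>
      have h := hstep 0
      rw [hx0] at h
      have : x 1 ∈ {Y | Y ∈ elliptope n ∧ ∀ Z ∈ elliptope n, frob M Z ≤ frob M Y} :=
        ⟨h.1, h.2⟩
      rw [hmain] at this
      exact this
    | succ k ih =>
      have h := hstep (k + 1)
      rw [ih] at h
      have : x (k + 1 + 1) ∈ {Y | Y ∈ elliptope n ∧ ∀ Z ∈ elliptope n, frob X Z ≤ frob X Y} :=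
        ⟨h.1, h.2⟩
      rw [hXset] at this
      exact this
  apply tendsto_atTop_of_eventually_const (i₀ := 1)
  intro i hi
  obtain ⟨k, rfl⟩ := Nat.exists_eq_add_of_le hi
  rw [add_comm]
  exact hconst k
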